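/- Let a, b, c, d > 0, θ := √((a+c+bd)² − 4abd), x₀ := (a+c+bd−θ)/(2b), y₀ := (a+c−bd+θ)/(2d). Let x, y : ℝ → ℝ be differentiable with x(t) ≥ 0 and y(t) ≥ 0 for all t ≥ 0, satisfying x'(t) = a − b·x(t) − x(t)·y(t) and y'(t) = c − d·y(t) + x(t)·y(t) for all t ≥ 0. Then x(t) → x₀ and y(t) → y₀ as t → ∞. -/

import Mathlib

open Filter

lemma aux_log_le (z z₀ : ℝ) (hz : 0 < z) (h0 : 0 < z₀) :
    z₀ * (Real.log z - Real.log z₀) ≤ z - z₀ := by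
  have h1 : Real.log (z / z₀) ≤ z / z₀ - 1 :=
    Real.log_le_sub_one_of_pos (div_pos hz h0)
  rw [Real.log_div hz.ne' h0.ne'] at h1
  have h2 : z₀ * (Real.log z - Real.log z₀) ≤ z₀ * (z / z₀ - 1) :=
    mul_le_mul_of_nonneg_left h1 h0.le
  have h3 : z₀ * (z / z₀ - 1) = z - z₀ := by field_simp
  linarith

lemma aux_phi_nonneg (z z₀ : ℝ) (hz : 0 < z) (h0 : 0 < z₀) :
    0 ≤ z - z₀ - z₀ * (Real.log z - Real.log z₀) := by
  have := aux_log_le z z₀ hz h0; linarith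

lemma aux_phi_mul_le (z z₀ : ℝ) (hz : 0 < z) (h0 : 0 < z₀) :
    z * (z - z₀ - z₀ * (Real.log z - Real.log z₀)) ≤ (z - z₀) ^ 2 := by
  have h1 := aux_log_le z₀ z h0 hz
  nlinarith [h1, h0.le, hz.le]

lemma aux_sqrt_sq_le (z z₀ : ℝ) (hz : 0 < z) (h0 : 0 < z₀) :
    (Real.sqrt z - Real.sqrt z₀) ^ 2 ≤ z - z₀ - z₀ * (Real.log z - Real.log z₀) := by
  have hs : Real.sqrt z ^ 2 = z := Real.sq_sqrt hz.le
  have hs0 : Real.sqrt z₀ ^ 2 = z₀ := Real.sq_sqrt h0.le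
  have hl : Real.log (Real.sqrt z) = Real.log z / 2 := Real.log_sqrt hz.le
  have hl0 : Real.log (Real.sqrt z₀) = Real.log z₀ / 2 := Real.log_sqrt h0.le
  have hps : 0 < Real.sqrt z := Real.sqrt_pos.mpr hz
  have hps0 : 0 < Real.sqrt z₀ := Real.sqrt_pos.mpr h0
  have key := aux_log_le (Real.sqrt z) (Real.sqrt z₀) hps hps0
  rw [hl, hl0] at key
  nlinarith [mul_le_mul_of_nonneg_left key hps0.le]

/-- The Lyapunov function. -/
noncomputable def auxV (x₀ y₀ : ℝ) (x y : ℝ → ℝ) : ℝ → ℝ :=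
  fun s => (x s - x₀)^2/2 + x₀*((y s - y₀) - y₀*(Real.log (y s) - Real.log y₀))

lemma auxV_hasDerivAt (x₀ y₀ : ℝ) (x y : ℝ → ℝ) (t X' Y' : ℝ)
    (hxt : HasDerivAt x X' t) (hyt : HasDerivAt y Y' t) (hY : y t ≠ 0) :
    HasDerivAt (auxV x₀ y₀ x y) ((x t - x₀)*X' + x₀*(Y' - y₀*(Y'/y t))) t := by
  have h1 : HasDerivAt (fun s => (x s - x₀)^2/2) ((x t - x₀)*X') t := by
    have h := ((hxt.sub_const x₀).pow 2).div_const 2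
    exact h.congr_deriv (by norm_num; ring)
  have h2 : HasDerivAt (fun s => Real.log (y s)) (Y' / y t) t := hyt.log hY
  have h3 : HasDerivAt (fun s => (y s - y₀) - y₀*(Real.log (y s) - Real.log y₀))
      (Y' - y₀*(Y'/y t)) t :=
    (hyt.sub_const y₀).sub ((h2.sub_const (Real.log y₀)).const_mul y₀)
  exact h1.add (h3.const_mul x₀)

/-- Pointwise decay inequality for the Lyapunov derivative. -/
lemma aux_decay (b d x₀ y₀ k X Y : ℝ) (hb : 0 < b) (hy0 : 0 < y₀) (hx0 : 0 < x₀)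
    (hY : 0 < Y) (hk1 : k ≤ 2*b) (hk2 : k ≤ d - x₀) (hk0 : 0 < k) :
    (X - x₀)*((b*x₀ + x₀*y₀) - b*X - X*Y)
      + x₀*(((d*y₀ - x₀*y₀) - d*Y + X*Y) - y₀*(((d*y₀ - x₀*y₀) - d*Y + X*Y) / Y))
      + k * ((X - x₀)^2/2 + x₀*((Y - y₀) - y₀*(Real.log Y - Real.log y₀))) ≤ 0 := by
  obtain ⟨u, hu⟩ : ∃ u', u' = X - x₀ := ⟨_, rfl⟩
  obtain ⟨v, hv⟩ : ∃ v', v' = Y - y₀ := ⟨_, rfl⟩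
  obtain ⟨φ, hφ⟩ : ∃ p, p = (Y - y₀) - y₀*(Real.log Y - Real.log y₀) := ⟨_, rfl⟩
  rw [show (Y - y₀) - y₀*(Real.log Y - Real.log y₀) = φ from hφ.symm,
      show X - x₀ = u from hu.symm]
  have hφ0 : 0 ≤ φ := hφ ▸ aux_phi_nonneg Y y₀ hY hy0
  have hφle : Y * φ ≤ v ^ 2 := by
    rw [hφ, hv]; exact aux_phi_mul_le Y y₀ hY hy0
  have hEY : (u*((b*x₀ + x₀*y₀) - b*X - X*Y)
      + x₀*(((d*y₀ - x₀*y₀) - d*Y + X*Y) - y₀*(((d*y₀ - x₀*y₀) - d*Y + X*Y) / Y))) * Y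
      = -((b+Y)*u^2*Y) + x₀*(x₀ - d)*v^2 := by
    rw [hu, hv]
    field_simp
    ring
  have hA1 : k*(u^2/2)*Y ≤ (b+Y)*u^2*Y := by
    nlinarith [mul_nonneg (by linarith : (0:ℝ) ≤ 2*b - k) (mul_nonneg (sq_nonneg u) hY.le),
      mul_nonneg (mul_nonneg hY.le (sq_nonneg u)) hY.le]
  have hA2 : k*(x₀*φ)*Y ≤ (d - x₀)*x₀*v^2 := by
    have h1 : 0 ≤ (d - x₀ - k)*(x₀*v^2) :=
      mul_nonneg (by linarith) (mul_nonneg hx0.le (sq_nonneg v))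
    have h2 : k*x₀*(Y*φ) ≤ k*x₀*v^2 :=
      mul_le_mul_of_nonneg_left hφle (by positivity)
    nlinarith [h1, h2]
  have hmain : (u*((b*x₀ + x₀*y₀) - b*X - X*Y)
      + x₀*(((d*y₀ - x₀*y₀) - d*Y + X*Y) - y₀*(((d*y₀ - x₀*y₀) - d*Y + X*Y) / Y))
      + k * (u^2/2 + x₀*φ)) * Y ≤ 0 := by
    nlinarith [hEY, hA1, hA2]
  nlinarith [hmain, hY]

theorem stmt_5 (a b c d : ℝ) (ha : 0 < a) (hb : 0 < b) (hc : 0 < c) (hd : 0 < d)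
    (x y : ℝ → ℝ) (hx : Differentiable ℝ x) (hy : Differentiable ℝ y)
    (hxnn : ∀ t : ℝ, 0 ≤ t → 0 ≤ x t) (hynn : ∀ t : ℝ, 0 ≤ t → 0 ≤ y t)
    (hxd : ∀ t : ℝ, 0 ≤ t → deriv x t = a - b * x t - x t * y t)
    (hyd : ∀ t : ℝ, 0 ≤ t → deriv y t = c - d * y t + x t * y t) :
    let θ := Real.sqrt ((a + c + b * d) ^ 2 - 4 * a * b * d)
    let x₀ := (a + c + b * d - θ) / (2 * b)
    let y₀ := (a + c - b * d + θ) / (2 * d)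
    Tendsto x atTop (nhds x₀) ∧ Tendsto y atTop (nhds y₀) := by
  intro θ x₀ y₀
  -- algebraic facts about the equilibrium
  have habd : 0 < a * b * d := by positivity
  have hbcd : 0 < b * c * d := by positivity
  have hrad : 0 ≤ (a + c + b * d) ^ 2 - 4 * a * b * d := by
    nlinarith [sq_nonneg (a - b*d), sq_nonneg c, mul_pos ha hc, hbcd]
  have hθ0 : 0 ≤ θ := Real.sqrt_nonneg _
  have hθsq : θ ^ 2 = (a + c + b * d) ^ 2 - 4 * a * b * d := Real.sq_sqrt hrad
  have hθlt : θ < a + c + b * d := by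
    nlinarith [hθsq, hθ0, habd, mul_pos hb hd, sq_nonneg (θ - (a+c+b*d))]
  have hθgt : a + c - b * d < θ := by nlinarith [hθsq, hθ0, hbcd]
  have hθgt2 : b * d - a - c < θ := by nlinarith [hθsq, hθ0, hbcd]
  have hx0 : 0 < x₀ := div_pos (by linarith) (by linarith)
  have hy0 : 0 < y₀ := div_pos (by linarith) (by linarith)
  have hx0d : x₀ < d := by
    show (a + c + b * d - θ) / (2 * b) < d
    rw [div_lt_iff₀ (by linarith : (0:ℝ) < 2*b)]
    linarith
  have hsum : b * x₀ + d * y₀ = a + c := by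
    show b * ((a + c + b * d - θ) / (2 * b)) + d * ((a + c - b * d + θ) / (2 * d)) = a + c
    field_simp; ring
  have haeq : a = b * x₀ + x₀ * y₀ := by
    show a = b * ((a + c + b * d - θ) / (2 * b)) +
      ((a + c + b * d - θ) / (2 * b)) * ((a + c - b * d + θ) / (2 * d))
    field_simp
    linear_combination hθsq
  have hceq : c = d * y₀ - x₀ * y₀ := by
    have h1 : x₀ * y₀ = a - b * x₀ := by linarith [haeq]
    linarith [hsum, h1]
  clear_value θ x₀ y₀
  clear hθ0 hθsq hθlt hθgt hθgt2 hrad habd hbcd hsum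
  -- positivity of y on (0, ∞)
  have hypos : ∀ t : ℝ, 0 < t → 0 < y t := by
    intro t ht
    rcases lt_or_eq_of_le (hynn t ht.le) with h | h
    · exact h
    · exfalso
      have hmin : IsLocalMin y t := by
        filter_upwards [eventually_gt_nhds ht] with s hs
        rw [← h]; exact hynn s hs.le
      have hz := hmin.deriv_eq_zero
      rw [hyd t ht.le, ← h] at hz
      nlinarith [hz]
  -- the decay rate
  obtain ⟨k, hkdef⟩ : ∃ k', k' = min (2*b) (d - x₀) := ⟨_, rfl⟩
  have hk1 : k ≤ 2*b := hkdef ▸ min_le_left _ _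
  have hk2 : k ≤ d - x₀ := hkdef ▸ min_le_right _ _
  have hk0 : 0 < k := hkdef ▸ lt_min (by linarith) (by linarith)
  clear hkdef
  -- the Lyapunov function and its derivative
  have hV : ∀ t : ℝ, 0 < t → HasDerivAt (auxV x₀ y₀ x y)
      ((x t - x₀)*(a - b*x t - x t*y t)
        + x₀*((c - d*y t + x t*y t) - y₀*((c - d*y t + x t*y t) / y t))) t := by
    intro t ht
    have hxt : HasDerivAt x (a - b*x t - x t*y t) t := by
      have h := (hx t).hasDerivAt; rwa [hxd t ht.le] at h
    have hyt : HasDerivAt y (c - d*y t + x t*y t) t := by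
      have h := (hy t).hasDerivAt; rwa [hyd t ht.le] at h
    exact auxV_hasDerivAt x₀ y₀ x y t _ _ hxt hyt (hypos t ht).ne'
  -- nonnegativity of V, and decay inequality
  have hVnn : ∀ t : ℝ, 0 < t → 0 ≤ auxV x₀ y₀ x y t := by
    intro t ht
    have h1 := aux_phi_nonneg (y t) y₀ (hypos t ht) hy0
    have h2 : (0:ℝ) ≤ (x t - x₀)^2/2 := by positivity
    show 0 ≤ (x t - x₀)^2/2 + x₀*((y t - y₀) - y₀*(Real.log (y t) - Real.log y₀))
    nlinarith [hx0]
  have hdecay : ∀ t : ℝ, 0 < t →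
      deriv (auxV x₀ y₀ x y) t + k * auxV x₀ y₀ x y t ≤ 0 := by
    intro t ht
    rw [(hV t ht).deriv, haeq, hceq]
    exact aux_decay b d x₀ y₀ k (x t) (y t) hb hy0 hx0 (hypos t ht) hk1 hk2 hk0
  -- W = V * exp(k t) and its derivative
  have hWd : ∀ t : ℝ, 0 < t → HasDerivAt (fun s => auxV x₀ y₀ x y s * Real.exp (k*s))
      ((deriv (auxV x₀ y₀ x y) t + k * auxV x₀ y₀ x y t) * Real.exp (k*t)) t := by
    intro t ht
    have he : HasDerivAt (fun s : ℝ => Real.exp (k*s)) (Real.exp (k*t) * (k*1)) t :=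
      ((hasDerivAt_id t).const_mul k).exp
    have h := (hV t ht).mul he
    exact h.congr_deriv (by rw [(hV t ht).deriv]; ring)
  have hcont : ContinuousOn (fun s => auxV x₀ y₀ x y s * Real.exp (k*s)) (Set.Ici 1) :=
    fun t ht => ((hWd t (by have : (1:ℝ) ≤ t := ht; linarith)).differentiableAt.continuousAt).continuousWithinAt
  have hdiff : DifferentiableOn ℝ (fun s => auxV x₀ y₀ x y s * Real.exp (k*s))
      (interior (Set.Ici 1)) := by
    rw [interior_Ici]
    exact fun t ht => ((hWd t (by have : (1:ℝ) < t := ht; linarith)).differentiableAt).differentiableWithinAt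
  have hnonpos : ∀ t ∈ interior (Set.Ici (1:ℝ)),
      deriv (fun s => auxV x₀ y₀ x y s * Real.exp (k*s)) t ≤ 0 := by
    rw [interior_Ici]
    intro t ht
    have ht0 : (0:ℝ) < t := by have : (1:ℝ) < t := ht; linarith
    rw [(hWd t ht0).deriv]
    have h1 := hdecay t ht0
    nlinarith [Real.exp_pos (k*t)]
  have hanti : AntitoneOn (fun s => auxV x₀ y₀ x y s * Real.exp (k*s)) (Set.Ici 1) :=
    antitoneOn_of_deriv_nonpos (convex_Ici 1) hcont hdiff hnonpos
  -- exponential bound on V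
  obtain ⟨C, hC⟩ : ∃ C, C = auxV x₀ y₀ x y 1 * Real.exp (k*1) := ⟨_, rfl⟩
  have hbound : ∀ t : ℝ, 1 ≤ t → auxV x₀ y₀ x y t ≤ C * Real.exp (-(k*t)) := by
    intro t ht
    have h1 : auxV x₀ y₀ x y t * Real.exp (k*t) ≤ C := by
      rw [hC]
      exact hanti Set.self_mem_Ici ht ht
    have h2 : auxV x₀ y₀ x y t = (auxV x₀ y₀ x y t * Real.exp (k*t)) * Real.exp (-(k*t)) := by
      rw [mul_assoc, ← Real.exp_add]
      simp
    rw [h2]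
    exact mul_le_mul_of_nonneg_right h1 (Real.exp_nonneg _)
  -- V tends to 0
  have hexp0 : Tendsto (fun t : ℝ => C * Real.exp (-(k*t))) atTop (nhds 0) := by
    have h1 : Tendsto (fun t : ℝ => k * t) atTop atTop :=
      Tendsto.const_mul_atTop hk0 tendsto_id
    have h2 : Tendsto (fun t : ℝ => -(k*t)) atTop atBot := tendsto_neg_atBot_iff.mpr h1
    have h3 : Tendsto (fun t : ℝ => Real.exp (-(k*t))) atTop (nhds 0) :=
      Real.tendsto_exp_atBot.comp h2
    have h4 := h3.const_mul C
    simpa using h4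
  have hVtend : Tendsto (auxV x₀ y₀ x y) atTop (nhds 0) := by
    apply tendsto_of_tendsto_of_tendsto_of_le_of_le' tendsto_const_nhds hexp0
    · filter_upwards [eventually_ge_atTop (1:ℝ)] with t ht
      exact hVnn t (by linarith)
    · filter_upwards [eventually_ge_atTop (1:ℝ)] with t ht
      exact hbound t ht
  -- limit of x
  have hxlim : Tendsto x atTop (nhds x₀) := by
    have h2V : Tendsto (fun t => Real.sqrt (2 * auxV x₀ y₀ x y t)) atTop (nhds 0) := by
      have h := (hVtend.const_mul 2).sqrt
      simpa using h
    have hlow : Tendsto (fun t => x₀ - Real.sqrt (2 * auxV x₀ y₀ x y t)) atTop (nhds x₀) := by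
      have h := (tendsto_const_nhds : Filter.Tendsto (fun _ : ℝ => x₀) atTop (nhds x₀)) |>.sub h2V
      simpa using h
    have hup : Tendsto (fun t => x₀ + Real.sqrt (2 * auxV x₀ y₀ x y t)) atTop (nhds x₀) := by
      have h := (tendsto_const_nhds : Filter.Tendsto (fun _ : ℝ => x₀) atTop (nhds x₀)) |>.add h2V
      simpa using h
    apply tendsto_of_tendsto_of_tendsto_of_le_of_le' hlow hup
    · filter_upwards [eventually_ge_atTop (1:ℝ)] with t ht
      have ht0 : (0:ℝ) < t := by linarith
      have hsq : (x t - x₀)^2 ≤ 2 * auxV x₀ y₀ x y t := by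
        have h1 := aux_phi_nonneg (y t) y₀ (hypos t ht0) hy0
        have : auxV x₀ y₀ x y t
            = (x t - x₀)^2/2 + x₀*((y t - y₀) - y₀*(Real.log (y t) - Real.log y₀)) := rfl
        nlinarith [hx0]
      have := abs_le.mp (Real.abs_le_sqrt hsq)
      linarith [this.1]
    · filter_upwards [eventually_ge_atTop (1:ℝ)] with t ht
      have ht0 : (0:ℝ) < t := by linarith
      have hsq : (x t - x₀)^2 ≤ 2 * auxV x₀ y₀ x y t := by
        have h1 := aux_phi_nonneg (y t) y₀ (hypos t ht0) hy0
        have : auxV x₀ y₀ x y t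
            = (x t - x₀)^2/2 + x₀*((y t - y₀) - y₀*(Real.log (y t) - Real.log y₀)) := rfl
        nlinarith [hx0]
      have := abs_le.mp (Real.abs_le_sqrt hsq)
      linarith [this.2]
  -- limit of y
  have hylim : Tendsto y atTop (nhds y₀) := by
    have hVx : Tendsto (fun t => Real.sqrt (auxV x₀ y₀ x y t / x₀)) atTop (nhds 0) := by
      have h := (hVtend.div_const x₀).sqrt
      simpa using h
    have hsy : Tendsto (fun t => Real.sqrt (y t)) atTop (nhds (Real.sqrt y₀)) := by
      have hlow : Tendsto (fun t => Real.sqrt y₀ - Real.sqrt (auxV x₀ y₀ x y t / x₀)) atTop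
          (nhds (Real.sqrt y₀)) := by
        have h := (tendsto_const_nhds : Filter.Tendsto (fun _ : ℝ => Real.sqrt y₀) atTop (nhds (Real.sqrt y₀))) |>.sub hVx
        simpa using h
      have hup : Tendsto (fun t => Real.sqrt y₀ + Real.sqrt (auxV x₀ y₀ x y t / x₀)) atTop
          (nhds (Real.sqrt y₀)) := by
        have h := (tendsto_const_nhds : Filter.Tendsto (fun _ : ℝ => Real.sqrt y₀) atTop (nhds (Real.sqrt y₀))) |>.add hVx
        simpa using h
      apply tendsto_of_tendsto_of_tendsto_of_le_of_le' hlow hup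
      · filter_upwards [eventually_ge_atTop (1:ℝ)] with t ht
        have ht0 : (0:ℝ) < t := by linarith
        have hsq : (Real.sqrt (y t) - Real.sqrt y₀)^2 ≤ auxV x₀ y₀ x y t / x₀ := by
          have h1 := aux_sqrt_sq_le (y t) y₀ (hypos t ht0) hy0
          rw [le_div_iff₀ hx0]
          have heq : auxV x₀ y₀ x y t
              = (x t - x₀)^2/2 + x₀*((y t - y₀) - y₀*(Real.log (y t) - Real.log y₀)) := rfl
          rw [heq]
          linarith [mul_le_mul_of_nonneg_left h1 hx0.le, sq_nonneg (x t - x₀)]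
        have := abs_le.mp (Real.abs_le_sqrt hsq)
        linarith [this.1]
      · filter_upwards [eventually_ge_atTop (1:ℝ)] with t ht
        have ht0 : (0:ℝ) < t := by linarith
        have hsq : (Real.sqrt (y t) - Real.sqrt y₀)^2 ≤ auxV x₀ y₀ x y t / x₀ := by
          have h1 := aux_sqrt_sq_le (y t) y₀ (hypos t ht0) hy0
          rw [le_div_iff₀ hx0]
          have heq : auxV x₀ y₀ x y t
              = (x t - x₀)^2/2 + x₀*((y t - y₀) - y₀*(Real.log (y t) - Real.log y₀)) := rfl
          rw [heq]
          linarith [mul_le_mul_of_nonneg_left h1 hx0.le, sq_nonneg (x t - x₀)]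
        have := abs_le.mp (Real.abs_le_sqrt hsq)
        linarith [this.2]
    have hsq2 : Tendsto (fun t => Real.sqrt (y t) ^ 2) atTop (nhds y₀) := by
      have h := hsy.pow 2
      rwa [Real.sq_sqrt hy0.le] at h
    apply hsq2.congr'
    filter_upwards [eventually_ge_atTop (0:ℝ)] with t ht
    exact Real.sq_sqrt (hynn t ht)
  exact ⟨hxlim, hylim⟩
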